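/- Define the change of variables \tilde{Q} by z + \tilde{Q}(-z) = (z + Q(-z)) \exp(\sum_{m\ge 1} a_m z^{2m-1}), where Q(c) = Q_0 + Q_1 c + Q_2 c^2 + .... Then the map (a_1, a_2, ...) \mapsto \tilde{Q}(Q, a) is the flow of the commuting family of linear vector fields L_m := \partial_{Q_{2m}} - \sum_{k\ge 0} Q_k \partial_{Q_{k+2m-1}}; that is, \partial \tilde{Q}/\partial a_m applied to any coefficient agrees with the action of multiplication by -c^{2m-1} on the shifted series c + Q(c) in the sense that \partial_{a_m}(z + \tilde{Q}(-z)) = z^{2m-1}(z + \tilde{Q}(-z)). -/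

import Mathlib

open Finset

/-- Index-shift lemma for antidiagonal sums. -/
private lemma shift_sum (r n : ℕ) (hr : r ≤ n) (g h : ℕ → ℝ) :
    ∑ p ∈ Finset.HasAntidiagonal.antidiagonal n, g p.1 * (if r ≤ p.2 then h (p.2 - r) else 0)
      = ∑ p ∈ Finset.HasAntidiagonal.antidiagonal (n - r), g p.1 * h p.2 := by
  rw [Finset.Nat.sum_antidiagonal_eq_sum_range_succ_mk,
      Finset.Nat.sum_antidiagonal_eq_sum_range_succ_mk]
  rw [← Finset.sum_subset
      (Finset.range_subset_range.2 (by omega) : range (n - r + 1) ⊆ range (n + 1))]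
  · refine Finset.sum_congr rfl fun i hi => ?_
    simp only [Finset.mem_range] at hi
    rw [if_pos (by omega)]
    have e : n - i - r = n - r - i := by omega
    rw [e]
  · intro i hi hni
    simp only [Finset.mem_range] at hi hni
    rw [if_neg (by omega), mul_zero]

/-- Coefficient of `X^r * φ`. -/
private lemma coeff_Xpow_mul (r n : ℕ) (φ : PowerSeries ℝ) :
    PowerSeries.coeff (R := ℝ) n ((PowerSeries.X : PowerSeries ℝ) ^ r * φ)
      = if r ≤ n then PowerSeries.coeff (R := ℝ) (n - r) φ else 0 := by
  rw [PowerSeries.coeff_mul]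
  by_cases h : r ≤ n
  · rw [if_pos h, Finset.sum_eq_single (r, n - r)]
    · rw [PowerSeries.coeff_X_pow, if_pos rfl, one_mul]
    · intro p hp hne
      obtain ⟨x, y⟩ := p
      rw [Finset.HasAntidiagonal.mem_antidiagonal] at hp
      rw [PowerSeries.coeff_X_pow, if_neg, zero_mul]
      intro hx
      exact hne (by simp only [Prod.mk.injEq]; omega)
    · intro hmem
      exact absurd (Finset.HasAntidiagonal.mem_antidiagonal.2 (by omega)) hmem
  · rw [if_neg h]
    apply Finset.sum_eq_zero
    intro p hp
    rw [Finset.HasAntidiagonal.mem_antidiagonal] at hp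
    rw [PowerSeries.coeff_X_pow, if_neg (by omega), zero_mul]

/-- Derivative of the coefficients of `E` in the parameter `s`. -/
private lemma Ederiv (a : ℕ → ℝ) (m : ℕ) (hm : 1 ≤ m)
    (E : ℝ → ℕ → ℝ)
    (hE0 : ∀ s, E s 0 = 1)
    (hErec : ∀ s : ℝ, ∀ n : ℕ, ((n : ℝ) + 1) * E s (n + 1) =
      ∑ p ∈ Finset.HasAntidiagonal.antidiagonal n,
        (if p.1 % 2 = 0 then
            ((p.1 + 1 : ℕ) : ℝ) * (Function.update a m s) ((p.1 + 2) / 2)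
          else 0) * E s p.2) :
    ∀ (n : ℕ) (s₀ : ℝ),
      HasDerivAt (fun s => E s n)
        (if 2 * m - 1 ≤ n then E s₀ (n - (2 * m - 1)) else 0) s₀ := by
  intro n
  induction n using Nat.strong_induction_on with
  | _ n ih =>
    intro s₀
    match n with
    | 0 =>
      rw [if_neg (by omega)]
      have h0 : (fun s => E s 0) = fun _ : ℝ => (1 : ℝ) := funext hE0
      rw [h0]
      exact hasDerivAt_const s₀ 1
    | Nat.succ n =>
      have h1 : ((n : ℝ) + 1) ≠ 0 := by positivity
      set r := 2 * m - 1 with hr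
      -- the coefficient functions and their derivatives
      set c : ℕ × ℕ → ℝ → ℝ := fun p s =>
        (if p.1 % 2 = 0 then
            ((p.1 + 1 : ℕ) : ℝ) * (Function.update a m s) ((p.1 + 2) / 2)
          else 0) with hc
      set c' : ℕ × ℕ → ℝ := fun p =>
        (if p.1 = 2 * m - 2 then ((2 * m - 1 : ℕ) : ℝ) else 0) with hc'
      set D : ℕ → ℝ := fun k => if r ≤ k then E s₀ (k - r) else 0 with hD
      have hEeq : (fun s => E s (n + 1)) =
          fun s => ((n : ℝ) + 1)⁻¹ * ∑ p ∈ Finset.HasAntidiagonal.antidiagonal n, c p s * E s p.2 := by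
        funext s
        rw [← hErec s n, inv_mul_cancel_left₀ h1]
      have hderc : ∀ p : ℕ × ℕ, HasDerivAt (c p) (c' p) s₀ := by
        intro p
        by_cases h2 : p.1 % 2 = 0
        · by_cases h3 : (p.1 + 2) / 2 = m
          · have hp1 : p.1 = 2 * m - 2 := by omega
            have hfun : c p = fun s => ((p.1 + 1 : ℕ) : ℝ) * s := by
              funext s
              simp only [hc]
              rw [if_pos h2, h3, Function.update_self]
            have hval : c' p = ((p.1 + 1 : ℕ) : ℝ) := by
              simp only [hc', if_pos hp1]
              congr 1
              omega
            rw [hfun, hval]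
            simpa using (hasDerivAt_id s₀).const_mul ((p.1 + 1 : ℕ) : ℝ)
          · have hfun : c p = fun _ : ℝ =>
                ((p.1 + 1 : ℕ) : ℝ) * a ((p.1 + 2) / 2) := by
              funext s
              simp only [hc, if_pos h2, Function.update_of_ne h3]
            have hval : c' p = 0 := by
              simp only [hc', ite_eq_right_iff]
              intro hp1
              exact absurd (by omega : (p.1 + 2) / 2 = m) h3
            rw [hfun, hval]
            exact hasDerivAt_const _ _
        · have hfun : c p = fun _ : ℝ => (0 : ℝ) := by
            funext s; simp [hc, h2]
          have hval : c' p = 0 := by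
            simp only [hc', ite_eq_right_iff]
            intro hp1
            exact absurd (by omega : p.1 % 2 = 0) h2
          rw [hfun, hval]
          exact hasDerivAt_const _ _
      have hsum : HasDerivAt
          (fun s => ∑ p ∈ Finset.HasAntidiagonal.antidiagonal n, c p s * E s p.2)
          (∑ p ∈ Finset.HasAntidiagonal.antidiagonal n, (c' p * E s₀ p.2 + c p s₀ * D p.2)) s₀ := by
        apply HasDerivAt.fun_sum
        intro p hp
        rw [Finset.HasAntidiagonal.mem_antidiagonal] at hp
        have hih := ih p.2 (by omega) s₀
        exact (hderc p).mul hih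
      have hd := hsum.const_mul (((n : ℝ) + 1)⁻¹)
      rw [hEeq]
      -- now identify the derivative value
      have hval : ((n : ℝ) + 1)⁻¹ *
          ∑ p ∈ Finset.HasAntidiagonal.antidiagonal n, (c' p * E s₀ p.2 + c p s₀ * D p.2)
          = if r ≤ n + 1 then E s₀ (n + 1 - r) else 0 := by
        rw [Finset.sum_add_distrib]
        have hA : ∑ p ∈ Finset.HasAntidiagonal.antidiagonal n, c' p * E s₀ p.2
            = if 2 * m - 2 ≤ n then ((2 * m - 1 : ℕ) : ℝ) * E s₀ (n - (2 * m - 2))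
              else 0 := by
          by_cases h4 : 2 * m - 2 ≤ n
          · rw [if_pos h4, Finset.sum_eq_single (2 * m - 2, n - (2 * m - 2))]
            · simp [hc']
            · intro p hp hne
              obtain ⟨x, y⟩ := p
              rw [Finset.HasAntidiagonal.mem_antidiagonal] at hp
              simp only [hc']
              rw [if_neg, zero_mul]
              intro hx
              exact hne (by simp only [Prod.mk.injEq]; omega)
            · intro hmem
              exact absurd (Finset.HasAntidiagonal.mem_antidiagonal.2 (by omega)) hmem
          · rw [if_neg h4]
            apply Finset.sum_eq_zero
            intro p hp
            rw [Finset.HasAntidiagonal.mem_antidiagonal] at hp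
            simp only [hc']
            rw [if_neg (by omega), zero_mul]
        have hB : ∑ p ∈ Finset.HasAntidiagonal.antidiagonal n, c p s₀ * D p.2
            = if r ≤ n then (((n - r : ℕ) : ℝ) + 1) * E s₀ (n - r + 1) else 0 := by
          by_cases h5 : r ≤ n
          · rw [if_pos h5, hErec s₀ (n - r)]
            exact shift_sum r n h5
              (fun i => if i % 2 = 0 then
                ((i + 1 : ℕ) : ℝ) * (Function.update a m s₀) ((i + 2) / 2) else 0)
              (E s₀)
          · rw [if_neg h5]
            apply Finset.sum_eq_zero
            intro p hp
            rw [Finset.HasAntidiagonal.mem_antidiagonal] at hp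
            rw [hD]
            simp only
            rw [if_neg (by omega), mul_zero]
        rw [hA, hB]
        by_cases h5 : r ≤ n
        · rw [if_pos (by omega : 2 * m - 2 ≤ n), if_pos h5, if_pos (by omega : r ≤ n + 1)]
          have e1 : n - (2 * m - 2) = n - r + 1 := by omega
          have e2 : n + 1 - r = n - r + 1 := by omega
          rw [e1, e2]
          have e3 : ((2 * m - 1 : ℕ) : ℝ) + (((n - r : ℕ) : ℝ) + 1) = (n : ℝ) + 1 := by
            have h6 : (2 * m - 1) + ((n - r) + 1) = n + 1 := by omega
            exact_mod_cast h6
          rw [← add_mul, e3, inv_mul_cancel_left₀ h1]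
        · by_cases h4 : 2 * m - 2 ≤ n
          · -- n = 2m - 2, n + 1 = r
            have hn : n = 2 * m - 2 := by omega
            rw [if_pos h4, if_neg h5, if_pos (by omega : r ≤ n + 1)]
            have e2 : n + 1 - r = 0 := by omega
            rw [e2, hE0, show n - (2 * m - 2) = 0 by omega, hE0, add_zero, mul_one]
            have e3 : ((2 * m - 1 : ℕ) : ℝ) = (n : ℝ) + 1 := by
              have h6 : 2 * m - 1 = n + 1 := by omega
              exact_mod_cast h6
            rw [e3, inv_mul_cancel₀ h1]
          · rw [if_neg h4, if_neg h5, if_neg (by omega : ¬ r ≤ n + 1), add_zero,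
              mul_zero]
      rw [← hval]
      exact hd

/-- with `z + Q̃(-z) := (z + Q(-z)) · exp(∑_m a_m z^{2m-1})` (the exponential
factor `E s` characterized by its ODE recursion, with the parameter `a_m` set to `s`),
the flow in the parameter `a_m` satisfies
`∂_{a_m} (z + Q̃(-z)) = z^{2m-1} (z + Q̃(-z))`, i.e. it is the flow of the linear vector
field `L_m` (multiplication by `-c^{2m-1}` on the shifted series `c + Q(c)`). -/
theorem stmt7 (q a : ℕ → ℝ) (m : ℕ) (hm : 1 ≤ m)
    (E : ℝ → ℕ → ℝ)
    (hE0 : ∀ s, E s 0 = 1)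
    (hErec : ∀ s : ℝ, ∀ n : ℕ, ((n : ℝ) + 1) * E s (n + 1) =
      ∑ p ∈ Finset.HasAntidiagonal.antidiagonal n,
        (if p.1 % 2 = 0 then
            ((p.1 + 1 : ℕ) : ℝ) * (Function.update a m s) ((p.1 + 2) / 2)
          else 0) * E s p.2)
    (F : ℝ → PowerSeries ℝ)
    (hF : ∀ s, F s = (PowerSeries.X + PowerSeries.mk q) * PowerSeries.mk (E s)) :
    ∀ (n : ℕ) (s₀ : ℝ),
      HasDerivAt (fun s => PowerSeries.coeff (R := ℝ) n (F s))
        (PowerSeries.coeff (R := ℝ) n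
          ((PowerSeries.X : PowerSeries ℝ) ^ (2 * m - 1) * F s₀)) s₀ := by
  intro n s₀
  set r := 2 * m - 1 with hr
  set g : ℕ → ℝ := fun i => PowerSeries.coeff (R := ℝ) i (PowerSeries.X + PowerSeries.mk q)
    with hg
  have hFc : ∀ (k : ℕ) (s : ℝ), PowerSeries.coeff (R := ℝ) k (F s)
      = ∑ p ∈ Finset.HasAntidiagonal.antidiagonal k, g p.1 * E s p.2 := by
    intro k s
    rw [hF, PowerSeries.coeff_mul]
    simp [hg]
  have hEd := Ederiv a m hm E hE0 hErec
  have hfun : (fun s => PowerSeries.coeff (R := ℝ) n (F s))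
      = fun s => ∑ p ∈ Finset.HasAntidiagonal.antidiagonal n, g p.1 * E s p.2 := by
    funext s; exact hFc n s
  rw [hfun]
  have hsum : HasDerivAt
      (fun s => ∑ p ∈ Finset.HasAntidiagonal.antidiagonal n, g p.1 * E s p.2)
      (∑ p ∈ Finset.HasAntidiagonal.antidiagonal n,
        g p.1 * (if r ≤ p.2 then E s₀ (p.2 - r) else 0)) s₀ := by
    apply HasDerivAt.fun_sum
    intro p _
    exact (hEd p.2 s₀).const_mul (g p.1)
  have hval : (∑ p ∈ Finset.HasAntidiagonal.antidiagonal n,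
        g p.1 * (if r ≤ p.2 then E s₀ (p.2 - r) else 0))
      = PowerSeries.coeff (R := ℝ) n
          ((PowerSeries.X : PowerSeries ℝ) ^ r * F s₀) := by
    rw [coeff_Xpow_mul]
    by_cases h : r ≤ n
    · rw [if_pos h, hFc (n - r) s₀]
      exact shift_sum r n h g (E s₀)
    · rw [if_neg h]
      apply Finset.sum_eq_zero
      intro p hp
      rw [Finset.HasAntidiagonal.mem_antidiagonal] at hp
      rw [if_neg (by omega), mul_zero]
  rw [← hval]
  exact hsum
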